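/- Under the scalar sign dynamics, assume θ(τ) ≠ θ* for all τ ≥ 0 and let the first flip occur at iteration τ₁. Then for every τ ≥ τ₁, the number N(τ) of flip iterations in {1, …, τ} satisfies N(τ) ≥ 1 + ⌊(τ - τ₁) / C⌋, where C = ⌈γ⁻¹⌉. -/

import Mathlib

open Classical in
/-- If `θ(τ) ≠ θ*` for all τ and the first flip occurs at `τ₁`, then for all
`τ ≥ τ₁` the number `N(τ)` of flips in `{1,…,τ}` satisfies `N(τ) ≥ 1 + ⌊(τ - τ₁)/C⌋`
with `C = ⌈γ⁻¹⌉`. -/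
theorem flip_count_lower_bound
    (θs γ η0 θ0 : ℝ) (hγ0 : 0 < γ) (hγ1 : γ < 1) (hη0 : 0 < η0)
    (θ η s : ℕ → ℝ)
    (hθinit : θ 0 = θ0) (hηinit : η 0 = η0)
    (hs : ∀ τ, s τ = -Real.sign (θ τ - θs))
    (hθrec : ∀ τ, θ (τ + 1) = θ τ + s τ * η τ)
    (hηrec : ∀ τ, η (τ + 1) = if s (τ + 1) * s τ = -1 then γ * η τ else η τ)
    (hne : ∀ τ : ℕ, θ τ ≠ θs)
    (τ₁ : ℕ) (hτ₁ : 1 ≤ τ₁)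
    (hflip : s τ₁ * s (τ₁ - 1) = -1)
    (hfirst : ∀ k : ℕ, 1 ≤ k → k < τ₁ → s k * s (k - 1) ≠ -1) :
    ∀ τ : ℕ, τ₁ ≤ τ →
      1 + ((τ : ℤ) - (τ₁ : ℤ)) / ⌈γ⁻¹⌉ ≤
        (((Finset.Icc 1 τ).filter (fun k => s k * s (k - 1) = -1)).card : ℤ) := by
  have hs_pm : ∀ τ, s τ = 1 ∨ s τ = -1 := by
    intro τ
    rcases lt_or_gt_of_ne (sub_ne_zero.mpr (hne τ)) with h | h
    · left; rw [hs τ, Real.sign_of_neg h]; ring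
    · right; rw [hs τ, Real.sign_of_pos h]
  have hs_sq : ∀ τ, s τ * s τ = 1 := by
    intro τ; rcases hs_pm τ with h | h <;> rw [h] <;> ring
  have hη_pos : ∀ τ, 0 < η τ := by
    intro τ; induction τ with
    | zero => rw [hηinit]; exact hη0
    | succ n ih => rw [hηrec n]; split
                   · exact mul_pos hγ0 ih
                   · exact ih
  set d : ℕ → ℝ := fun τ => s τ * (θs - θ τ) with hd
  have hd_pos : ∀ τ, 0 < d τ := by
    intro τ
    rcases lt_or_gt_of_ne (sub_ne_zero.mpr (hne τ)) with h | h
    · have hs1 : s τ = 1 := by rw [hs τ, Real.sign_of_neg h]; ring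
      simp only [hd, hs1, one_mul]; linarith [sub_neg.mp h]
    · have hs1 : s τ = -1 := by rw [hs τ, Real.sign_of_pos h]
      simp only [hd, hs1]; nlinarith [sub_pos.mp h]
  have hnoflip_eq : ∀ t, s (t+1) * s t ≠ -1 → s (t+1) = s t := by
    intro t h
    rcases hs_pm (t+1) with h1 | h1 <;> rcases hs_pm t with h2 | h2
    · rw [h1, h2]
    · exfalso; apply h; rw [h1, h2]; ring
    · exfalso; apply h; rw [h1, h2]; ring
    · rw [h1, h2]
  have hstep : ∀ t, s (t+1) * s t ≠ -1 → d (t+1) = d t - η t ∧ η (t+1) = η t := by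
    intro t h
    have he := hnoflip_eq t h
    refine ⟨?_, ?_⟩
    · show s (t+1) * (θs - θ (t+1)) = s t * (θs - θ t) - η t
      rw [hθrec t, he]
      linear_combination (-(η t)) * hs_sq t
    · rw [hηrec t]; simp [h]
  have hflip_d : ∀ t, s (t+1) * s t = -1 → d (t+1) < η t ∧ η (t+1) = γ * η t := by
    intro t h
    have hsne : s (t+1) = - s t := by
      rcases hs_pm (t+1) with h1 | h1 <;> rcases hs_pm t with h2 | h2
      · exfalso; rw [h1, h2] at h; norm_num at h
      · rw [h1, h2]; try norm_num
      · rw [h1, h2]; try norm_num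
      · exfalso; rw [h1, h2] at h; norm_num at h
    refine ⟨?_, ?_⟩
    · have hkey : d (t+1) = η t - d t := by
        show s (t+1) * (θs - θ (t+1)) = η t - s t * (θs - θ t)
        rw [hθrec t, hsne]
        linear_combination (η t) * hs_sq t
      have := hd_pos t
      rw [hkey]; linarith
    · rw [hηrec t]; simp [h]
  -- the constant C
  set C : ℕ := (⌈γ⁻¹⌉).toNat with hCdef
  have hγinv : 1 < γ⁻¹ := (one_lt_inv₀ hγ0).mpr hγ1
  have hCeq : (⌈γ⁻¹⌉ : ℤ) = (C : ℤ) := by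
    rw [hCdef, Int.toNat_of_nonneg (Int.ceil_nonneg (by positivity))]
  have hCreal : γ⁻¹ ≤ (C : ℝ) := by
    have h1 := Int.le_ceil γ⁻¹
    have h2 : ((⌈γ⁻¹⌉ : ℤ) : ℝ) = (C : ℝ) := by exact_mod_cast congrArg (fun z : ℤ => (z : ℝ)) hCeq
    linarith [h1, h2.ge, h2.le]
  have hCpos : 0 < C := by
    by_contra h
    push_neg at h
    interval_cases C
    simp at hCreal
    linarith
  -- Lemma A: after a flip, another flip occurs within C steps
  have lemA : ∀ t, 1 ≤ t → s t * s (t-1) = -1 →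
      ∃ t', t < t' ∧ t' ≤ t + C ∧ s t' * s (t'-1) = -1 := by
    intro t ht hf
    by_contra hno
    push_neg at hno
    have key : ∀ k, k ≤ C → d (t + k) = d t - k * η t ∧ η (t + k) = η t := by
      intro k hk
      induction k with
      | zero => simp
      | succ n ih =>
        obtain ⟨hdn, hηn⟩ := ih (le_of_lt (Nat.lt_of_succ_le hk))
        have hnf : s (t + n + 1) * s (t + n) ≠ -1 := by
          have h := hno (t + n + 1) (by omega) (by omega)
          simpa using h
        obtain ⟨h1, h2⟩ := hstep (t + n) hnf
        constructor
        · have : t + (n+1) = t + n + 1 := rfl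
          rw [this, h1, hdn, hηn]; push_cast; ring
        · have : t + (n+1) = t + n + 1 := rfl
          rw [this, h2, hηn]
    obtain ⟨hdC, _⟩ := key C le_rfl
    obtain ⟨t0, rfl⟩ : ∃ t0, t = t0 + 1 := ⟨t - 1, by omega⟩
    have hf' : s (t0+1) * s t0 = -1 := by simpa using hf
    obtain ⟨hdt, hηt⟩ := hflip_d t0 hf'
    have hdCpos := hd_pos (t0 + 1 + C)
    rw [hdC] at hdCpos
    have hηt0 := hη_pos t0
    have hCγ : 1 ≤ (C:ℝ) * γ := by
      have h := mul_le_mul_of_nonneg_right hCreal hγ0.le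
      rwa [inv_mul_cancel₀ hγ0.ne'] at h
    nlinarith [hdCpos, hdt, hηt, hηt0, hCγ]
  -- Lemma B: counting
  set F : ℕ → Finset ℕ := fun τ => (Finset.Icc 1 τ).filter (fun k => s k * s (k - 1) = -1) with hF
  have lemB : ∀ j : ℕ, ∃ t, 1 ≤ t ∧ s t * s (t-1) = -1 ∧ τ₁ ≤ t ∧ t ≤ τ₁ + j * C ∧
      j + 1 ≤ (F t).card := by
    intro j
    induction j with
    | zero =>
      refine ⟨τ₁, hτ₁, hflip, le_rfl, by omega, ?_⟩
      have hmem : τ₁ ∈ F τ₁ := Finset.mem_filter.mpr ⟨Finset.mem_Icc.mpr ⟨hτ₁, le_rfl⟩, hflip⟩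
      exact Finset.card_pos.mpr ⟨τ₁, hmem⟩
    | succ j ih =>
      obtain ⟨t, ht1, htf, htlo, hthi, htcard⟩ := ih
      obtain ⟨t', ht'1, ht'2, ht'f⟩ := lemA t ht1 htf
      have hmul : (j+1) * C = j * C + C := by ring
      refine ⟨t', by omega, ht'f, by omega, by rw [hmul]; omega, ?_⟩
      have hsub : insert t' (F t) ⊆ F t' := by
        apply Finset.insert_subset
        · exact Finset.mem_filter.mpr ⟨Finset.mem_Icc.mpr ⟨by omega, le_rfl⟩, ht'f⟩
        · exact Finset.filter_subset_filter _ (Finset.Icc_subset_Icc_right (by omega))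
      have hnotmem : t' ∉ F t := by
        intro hmem
        have := (Finset.mem_Icc.mp (Finset.mem_filter.mp hmem).1).2
        omega
      have hc := Finset.card_le_card hsub
      rw [Finset.card_insert_of_notMem hnotmem] at hc
      omega
  intro τ hτ
  obtain ⟨t, ht1, htf, htlo, hthi, htcard⟩ := lemB ((τ - τ₁) / C)
  have htτ : t ≤ τ := by
    have := Nat.div_mul_le_self (τ - τ₁) C
    omega
  have hmono : (F t).card ≤ (F τ).card :=
    Finset.card_le_card (Finset.filter_subset_filter _ (Finset.Icc_subset_Icc_right htτ))
  have hcast : ((τ : ℤ) - (τ₁ : ℤ)) / ⌈γ⁻¹⌉ = (((τ - τ₁) / C : ℕ) : ℤ) := by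
    rw [hCeq]
    rw [show (τ : ℤ) - (τ₁ : ℤ) = ((τ - τ₁ : ℕ) : ℤ) by omega]
    exact (Int.natCast_ediv _ _).symm
  rw [hcast]
  have hfin : (τ - τ₁) / C + 1 ≤ (F τ).card := by omega
  have h3 : (((τ - τ₁) / C + 1 : ℕ) : ℤ) ≤ ((F τ).card : ℤ) := Int.ofNat_le.mpr hfin
  have h4 : (1 : ℤ) + (((τ - τ₁) / C : ℕ) : ℤ) = (((τ - τ₁) / C + 1 : ℕ) : ℤ) := by
    push_cast; ring
  rw [h4]
  exact h3
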